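/- Let k ≥ 1, λ ≥ 1. Define the phase φ(u) = √(|u₁ - 1|² + |u'|² + t²) − √(|u₁ - z₁|² + |u'|² + t²) for u = (u₁, u') ∈ ℝ × ℝ^{k-1}, where t ≈ r ∈ (0,1] and z₁ ∼ 1, z₁ ≠ 1. Then on the region where both square roots are ≈ 1, one has |∂_{u₁} φ(u)| ≳ (r² + |u'|²)|1 − z₁| and for every multi-index α in u₁, |∂_{u₁}^α φ(u)| ≲ (r² + |u'|²)|1 − z₁|. -/

import Mathlib

open Polynomial Set Finset

/-- Recursive polynomials for iterated derivatives of `(x²+s)^(-3/2)`: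
outer variable = x, inner variable = s. -/
noncomputable def QQ : ℕ → Polynomial (Polynomial ℝ)
  | 0 => 1
  | n+1 => derivative (QQ n) * (X ^ 2 + C X) - ((2*n+3 : ℕ) : Polynomial (Polynomial ℝ)) * (X * QQ n)

/-- Evaluation of such a polynomial at `s`, `x`. -/
noncomputable def EE (s x : ℝ) (q : Polynomial (Polynomial ℝ)) : ℝ :=
  eval x (q.map (evalRingHom s))

lemma EE_QQ_zero (s x : ℝ) : EE s x (QQ 0) = 1 := by
  simp [EE, QQ]

lemma EE_QQ_succ (s x : ℝ) (n : ℕ) :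
    EE s x (QQ (n+1)) =
      EE s x (derivative (QQ n)) * (x ^ 2 + s) - (2*n+3) * (x * EE s x (QQ n)) := by
  simp [EE, QQ, Polynomial.map_mul, Polynomial.map_sub, Polynomial.map_add, Polynomial.map_pow]

lemma EE_hasDerivAt (s x : ℝ) (q : Polynomial (Polynomial ℝ)) :
    HasDerivAt (fun y => EE s y q) (EE s x (derivative q)) x := by
  simpa [EE, derivative_map] using (q.map (evalRingHom s)).hasDerivAt x

lemma continuous_EE (q : Polynomial (Polynomial ℝ)) :
    Continuous fun p : ℝ × ℝ => EE p.1 p.2 q := by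
  have h : ∀ p : ℝ × ℝ, EE p.1 p.2 q =
      ∑ i ∈ Finset.range (q.natDegree + 1), (q.coeff i).eval p.1 * p.2 ^ i := by
    intro p
    rw [EE, Polynomial.eval_map, Polynomial.eval₂_eq_sum_range]
    rfl
  simp only [funext h]
  exact continuous_finset_sum _ fun i _ =>
    ((q.coeff i).continuous.comp continuous_fst).mul (continuous_snd.pow i)

lemma hasDerivAt_QQ_rpow (n : ℕ) {s : ℝ} (hs : 0 < s) (x : ℝ) :
    HasDerivAt (fun y => EE s y (QQ n) * (y ^ 2 + s) ^ (-(3/2) - n : ℝ))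
      (EE s x (QQ (n+1)) * (x ^ 2 + s) ^ (-(3/2) - (n+1) : ℝ)) x := by
  have hpos : 0 < x ^ 2 + s := by positivity
  have h2 : HasDerivAt (fun y : ℝ => y ^ 2 + s) (2 * x) x := by
    simpa using ((hasDerivAt_pow 2 x).add_const s)
  have h3 : HasDerivAt (fun y : ℝ => (y ^ 2 + s) ^ (-(3/2) - n : ℝ))
      (2 * x * (-(3/2) - n : ℝ) * (x ^ 2 + s) ^ ((-(3/2) - n : ℝ) - 1)) x :=
    h2.rpow_const (Or.inl hpos.ne')
  have h1 := EE_hasDerivAt s x (QQ n)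
  have := h1.mul h3
  refine this.congr_deriv ?_
  symm
  have hsplit : (x ^ 2 + s) ^ (-(3/2) - n : ℝ)
      = (x ^ 2 + s) ^ ((-(3/2) - n : ℝ) - 1) * (x ^ 2 + s) := by
    nth_rewrite 1 [show (-(3/2) - n : ℝ) = ((-(3/2) - n : ℝ) - 1) + 1 by ring]
    rw [Real.rpow_add hpos, Real.rpow_one]
  rw [EE_QQ_succ]
  have hexp : (-(3/2) - ((n:ℝ)+1) : ℝ) = (-(3/2) - n : ℝ) - 1 := by ring
  rw [hexp, hsplit]
  ring

noncomputable def hfun (s x : ℝ) : ℝ := x / Real.sqrt (x ^ 2 + s)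

lemma hasDerivAt_hfun {s : ℝ} (hs : 0 < s) (x : ℝ) :
    HasDerivAt (hfun s) (s * (EE s x (QQ 0) * (x ^ 2 + s) ^ (-(3/2) - (0:ℕ) : ℝ))) x := by
  have hpos : 0 < x ^ 2 + s := by positivity
  have hsq : Real.sqrt (x ^ 2 + s) > 0 := Real.sqrt_pos.2 hpos
  have h2 : HasDerivAt (fun y : ℝ => y ^ 2 + s) (2 * x) x := by
    simpa using ((hasDerivAt_pow 2 x).add_const s)
  have h3 : HasDerivAt (fun y : ℝ => Real.sqrt (y ^ 2 + s))
      (2 * x / (2 * Real.sqrt (x ^ 2 + s))) x := h2.sqrt hpos.ne'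
  have h4 := (hasDerivAt_id x).div h3 hsq.ne'
  refine h4.congr_deriv ?_
  symm
  rw [EE_QQ_zero]
  have hsqsq : Real.sqrt (x ^ 2 + s) ^ 2 = x ^ 2 + s := Real.sq_sqrt hpos.le
  have hrw : (x ^ 2 + s) ^ (-(3/2) - (0:ℕ) : ℝ) = ((x ^ 2 + s) * Real.sqrt (x ^ 2 + s))⁻¹ := by
    rw [show (-(3/2) - (0:ℕ) : ℝ) = -(1 + 1/2) by norm_num, Real.rpow_neg hpos.le,
      Real.rpow_add hpos, Real.rpow_one, ← Real.sqrt_eq_rpow]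
  rw [hrw]
  field_simp
  simp only [id_eq]
  linear_combination (-x^2) * hsqsq

lemma iteratedDeriv_hfun {s : ℝ} (hs : 0 < s) (n : ℕ) :
    iteratedDeriv (n+1) (hfun s)
      = fun x => s * (EE s x (QQ n) * (x ^ 2 + s) ^ (-(3/2) - n : ℝ)) := by
  induction n with
  | zero =>
    rw [show (0:ℕ)+1 = 1 from rfl, iteratedDeriv_one]
    exact funext fun x => (hasDerivAt_hfun hs x).deriv
  | succ n ih =>
    rw [iteratedDeriv_succ, ih]
    refine funext fun x => ?_
    have : HasDerivAt (fun y => s * (EE s y (QQ n) * (y ^ 2 + s) ^ (-(3/2) - n : ℝ)))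
        (s * (EE s x (QQ (n+1)) * (x ^ 2 + s) ^ (-(3/2) - ((n:ℝ)+1) : ℝ))) x :=
      (hasDerivAt_QQ_rpow n hs x).const_mul s
    rw [this.deriv]
    push_cast
    ring_nf

lemma hasDerivAt_iteratedDeriv_hfun {s : ℝ} (hs : 0 < s) (n : ℕ) (x : ℝ) :
    HasDerivAt (iteratedDeriv n (hfun s)) (iteratedDeriv (n+1) (hfun s) x) x := by
  cases n with
  | zero =>
    rw [iteratedDeriv_zero, iteratedDeriv_hfun hs 0]
    exact hasDerivAt_hfun hs x
  | succ n =>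
    rw [iteratedDeriv_hfun hs n, iteratedDeriv_hfun hs (n+1)]
    have : HasDerivAt (fun y => s * (EE s y (QQ n) * (y ^ 2 + s) ^ (-(3/2) - n : ℝ)))
        (s * (EE s x (QQ (n+1)) * (x ^ 2 + s) ^ (-(3/2) - ((n:ℝ)+1) : ℝ))) x :=
      (hasDerivAt_QQ_rpow n hs x).const_mul s
    push_cast
    exact this

lemma exists_EE_bound (n : ℕ) :
    ∃ M > (0:ℝ), ∀ s x : ℝ, 0 ≤ s → s ≤ 4 → |x| ≤ 2 → |EE s x (QQ n)| ≤ M := by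
  have hK : IsCompact ((Set.Icc (0:ℝ) 4) ×ˢ (Set.Icc (-2:ℝ) 2)) :=
    (isCompact_Icc).prod (isCompact_Icc)
  have hne : ((Set.Icc (0:ℝ) 4) ×ˢ (Set.Icc (-2:ℝ) 2)).Nonempty :=
    ⟨(0, 0), by constructor <;> constructor <;> norm_num⟩
  have hcont : ContinuousOn (fun p : ℝ × ℝ => |EE p.1 p.2 (QQ n)|)
      ((Set.Icc (0:ℝ) 4) ×ˢ (Set.Icc (-2:ℝ) 2)) :=
    ((continuous_EE (QQ n)).abs).continuousOn
  obtain ⟨p, -, hp⟩ := hK.exists_isMaxOn hne hcont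
  refine ⟨max (|EE p.1 p.2 (QQ n)|) 1, by positivity, fun s x hs hs4 hx => ?_⟩
  have hmem : ((s, x) : ℝ × ℝ) ∈ (Set.Icc (0:ℝ) 4) ×ˢ (Set.Icc (-2:ℝ) 2) :=
    ⟨⟨hs, hs4⟩, abs_le.1 hx⟩
  exact le_trans (hp hmem) (le_max_left _ _)

lemma seg_core {s a b x : ℝ} (hs : 0 < s)
    (ha1 : 1/4 ≤ a^2+s) (ha4 : a^2+s ≤ 4) (hb1 : 1/4 ≤ b^2+s) (hb4 : b^2+s ≤ 4)
    (hab : (a-b)^2 ≤ 1/4) (hxa : a ≤ x) (hxb : x ≤ b) :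
    3/16 ≤ x^2+s ∧ x^2+s ≤ 4 := by
  rcases eq_or_lt_of_le (hxa.trans hxb) with heq | hlt
  · subst heq
    have hxa' : x = a := le_antisymm (by linarith) hxa
    subst hxa'
    constructor <;> nlinarith
  · constructor
    · by_cases hs316 : 3/16 ≤ s
      · nlinarith
      · push_neg at hs316
        have habpos : 0 < a * b := by
          by_contra hab0
          push_neg at hab0
          have h1 : (1/4 - s)^2 ≤ a^2 * b^2 := by nlinarith
          have h2 : 1/4 - s ≤ -(a*b) := by nlinarith
          nlinarith
        rcases lt_or_ge 0 a with hapos | haneg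
        · nlinarith
        · have hbneg : b < 0 := by
            by_contra hb0
            push_neg at hb0
            nlinarith [mul_nonpos_of_nonpos_of_nonneg haneg hb0]
          nlinarith
    · nlinarith [mul_nonneg (sub_nonneg.2 hxa) (sub_nonneg.2 hxb),
        mul_nonneg (mul_nonneg (sub_nonneg.2 hxa) (sub_nonneg.2 hxb)) (le_of_lt (sub_pos.2 hlt)),
        mul_nonneg (sub_nonneg.2 hxb) (by linarith : (0:ℝ) ≤ 4 - (a^2+s)),
        mul_nonneg (sub_nonneg.2 hxa) (by linarith : (0:ℝ) ≤ 4 - (b^2+s))]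

lemma seg_est {s a b : ℝ} (hs : 0 < s)
    (ha1 : 1/4 ≤ a^2+s) (ha4 : a^2+s ≤ 4) (hb1 : 1/4 ≤ b^2+s) (hb4 : b^2+s ≤ 4)
    (hab : (a-b)^2 ≤ 1/4) :
    ∀ x ∈ Set.uIcc a b, 3/16 ≤ x^2+s ∧ x^2+s ≤ 4 := by
  intro x hx
  rcases le_total a b with h | h
  · rw [Set.uIcc_of_le h] at hx
    exact seg_core hs ha1 ha4 hb1 hb4 hab hx.1 hx.2
  · rw [Set.uIcc_of_ge h] at hx
    exact seg_core hs hb1 hb4 ha1 ha4 (by nlinarith) hx.1 hx.2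

lemma four_rpow : (4:ℝ) ^ (-(3/2) - ((0:ℕ):ℝ)) = 1/8 := by
  have h1 : (4:ℝ) ^ ((3:ℝ)/2) = 8 := by
    rw [show ((3:ℝ)/2) = (3:ℕ) * (1/2 : ℝ) by norm_num, Real.rpow_mul (by norm_num),
      Real.rpow_natCast, ← Real.sqrt_eq_rpow]
    rw [show ((4:ℝ)^(3:ℕ)) = 64 by norm_num, show (64:ℝ) = 8^2 by norm_num, Real.sqrt_sq]
    norm_num
  rw [show (-(3/2) - ((0:ℕ):ℝ)) = -((3:ℝ)/2) by norm_num, Real.rpow_neg (by norm_num), h1]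
  norm_num

lemma hfun_lower_core {s a b : ℝ} (hs : 0 < s) (ha4 : a^2+s ≤ 4) (hb4 : b^2+s ≤ 4)
    (hlt : a < b) : s/8 * (b - a) ≤ |hfun s b - hfun s a| := by
  set f' : ℝ → ℝ := fun x => s * (EE s x (QQ 0) * (x^2+s) ^ (-(3/2) - ((0:ℕ):ℝ))) with hf'
  have hcont : ContinuousOn (hfun s) (Set.Icc a b) := fun x _ =>
    (hasDerivAt_hfun hs x).continuousAt.continuousWithinAt
  have hderiv : ∀ x ∈ Set.Ioo a b, HasDerivAt (hfun s) (f' x) x := fun x _ =>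
    hasDerivAt_hfun hs x
  obtain ⟨c, hc, hslope⟩ := exists_hasDerivAt_eq_slope (hfun s) f' hlt hcont hderiv
  have hc4 : c^2 + s ≤ 4 := by
    obtain ⟨hca, hcb⟩ := hc
    nlinarith [mul_nonneg (sub_nonneg.2 hca.le) (sub_nonneg.2 hcb.le),
      mul_nonneg (mul_nonneg (sub_nonneg.2 hca.le) (sub_nonneg.2 hcb.le))
        (le_of_lt (sub_pos.2 hlt)),
      mul_nonneg (sub_nonneg.2 hcb.le) (by linarith : (0:ℝ) ≤ 4 - (a^2+s)),
      mul_nonneg (sub_nonneg.2 hca.le) (by linarith : (0:ℝ) ≤ 4 - (b^2+s))]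
  have hcpos : 0 < c^2 + s := by positivity
  have hrle : (1:ℝ)/8 ≤ (c^2+s) ^ (-(3/2) - ((0:ℕ):ℝ)) := by
    rw [← four_rpow]
    exact Real.rpow_le_rpow_of_nonpos hcpos hc4 (by norm_num)
  have hf'c : s/8 ≤ f' c := by
    rw [hf']
    simp only [EE_QQ_zero, one_mul]
    calc s/8 = s * (1/8) := by ring
    _ ≤ s * ((c^2+s) ^ (-(3/2) - ((0:ℕ):ℝ))) := by
        exact mul_le_mul_of_nonneg_left hrle hs.le
  have hba : 0 < b - a := sub_pos.2 hlt
  have heq : hfun s b - hfun s a = f' c * (b - a) := by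
    field_simp at hslope
    linarith [hslope]
  rw [heq, abs_of_nonneg (by nlinarith : (0:ℝ) ≤ f' c * (b - a))]
  nlinarith

lemma hfun_upper {s a b : ℝ} (n : ℕ) {M : ℝ}
    (hM : ∀ s' x : ℝ, 0 ≤ s' → s' ≤ 4 → |x| ≤ 2 → |EE s' x (QQ n)| ≤ M)
    (hs : 0 < s) (hs4 : s ≤ 4)
    (ha1 : 1/4 ≤ a^2+s) (ha4 : a^2+s ≤ 4) (hb1 : 1/4 ≤ b^2+s) (hb4 : b^2+s ≤ 4)
    (hab : (a-b)^2 ≤ 1/4) :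
    |iteratedDeriv n (hfun s) a - iteratedDeriv n (hfun s) b| ≤
      s * (M * (3/16 : ℝ) ^ (-(3/2) - (n:ℝ))) * |a - b| := by
  set C : ℝ := s * (M * (3/16 : ℝ) ^ (-(3/2) - (n:ℝ))) with hC
  have hseg := seg_est hs ha1 ha4 hb1 hb4 hab
  have hbound : ∀ x ∈ Set.uIcc a b, ‖iteratedDeriv (n+1) (hfun s) x‖ ≤ C := by
    intro x hx
    obtain ⟨hlo, hhi⟩ := hseg x hx
    have hx2 : |x| ≤ 2 := by
      rw [abs_le]; constructor <;> nlinarith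
    have hxpos : 0 < x^2 + s := by positivity
    rw [iteratedDeriv_hfun hs n, Real.norm_eq_abs]
    have h1 : |s * (EE s x (QQ n) * (x ^ 2 + s) ^ (-(3/2) - (n:ℝ)))|
        = s * (|EE s x (QQ n)| * (x ^ 2 + s) ^ (-(3/2) - (n:ℝ))) := by
      rw [abs_mul, abs_mul, abs_of_nonneg hs.le,
        abs_of_nonneg (Real.rpow_nonneg hxpos.le _)]
    rw [h1, hC]
    have h2 : (x ^ 2 + s) ^ (-(3/2) - (n:ℝ)) ≤ (3/16 : ℝ) ^ (-(3/2) - (n:ℝ)) :=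
      Real.rpow_le_rpow_of_nonpos (by norm_num) hlo
        (by have : (0:ℝ) ≤ (n:ℝ) := Nat.cast_nonneg n; linarith)
    exact mul_le_mul_of_nonneg_left
      (mul_le_mul (hM s x hs.le hs4 hx2) h2 (Real.rpow_nonneg hxpos.le _)
        ((abs_nonneg _).trans (hM s x hs.le hs4 hx2))) hs.le
  have hderiv : ∀ x ∈ Set.uIcc a b,
      HasDerivWithinAt (iteratedDeriv n (hfun s)) (iteratedDeriv (n+1) (hfun s) x)
        (Set.uIcc a b) x := fun x _ =>
    (hasDerivAt_iteratedDeriv_hfun hs n x).hasDerivWithinAt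
  have := (convex_uIcc a b).norm_image_sub_le_of_norm_hasDerivWithin_le hderiv hbound
    (Set.right_mem_uIcc) (Set.left_mem_uIcc)
  simpa [Real.norm_eq_abs, abs_sub_comm] using this

lemma hasDerivAt_gfun {s : ℝ} (hs : 0 < s) (x : ℝ) :
    HasDerivAt (fun y : ℝ => Real.sqrt (y ^ 2 + s)) (hfun s x) x := by
  have hpos : 0 < x ^ 2 + s := by positivity
  have h2 : HasDerivAt (fun y : ℝ => y ^ 2 + s) (2 * x) x := by
    simpa using ((hasDerivAt_pow 2 x).add_const s)
  have h3 := h2.sqrt hpos.ne'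
  convert h3 using 1
  rw [hfun]
  ring

lemma deriv_gfun {s : ℝ} (hs : 0 < s) :
    deriv (fun y : ℝ => Real.sqrt (y ^ 2 + s)) = hfun s :=
  funext fun x => (hasDerivAt_gfun hs x).deriv

lemma hasDerivAt_shifted {s : ℝ} (hs : 0 < s) (z u : ℝ) :
    HasDerivAt (fun v : ℝ => Real.sqrt ((v - z) ^ 2 + s)) (hfun s (u - z)) u := by
  have h := (hasDerivAt_gfun hs (u - z)).comp u ((hasDerivAt_id u).sub_const z)
  rw [mul_one] at h
  exact h

lemma iteratedDeriv_shifted {s : ℝ} (m : ℕ) (z u : ℝ) :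
    iteratedDeriv m (fun v : ℝ => Real.sqrt ((v - z) ^ 2 + s)) u
      = iteratedDeriv m (fun y : ℝ => Real.sqrt (y ^ 2 + s)) (u - z) := by
  have h1 : (fun v : ℝ => Real.sqrt ((v - z) ^ 2 + s))
      = fun v : ℝ => (fun y : ℝ => Real.sqrt (y ^ 2 + s)) (v + (-z)) := by
    funext v; rw [sub_eq_add_neg]
  have h2 := congrFun
    (iteratedDeriv_comp_add_const m (fun y : ℝ => Real.sqrt (y ^ 2 + s)) (-z)) u
  rw [h1]
  simpa [sub_eq_add_neg] using h2

lemma contDiff_shifted {s : ℝ} (hs : 0 < s) (z : ℝ) (m : ℕ) :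
    ContDiff ℝ m (fun v : ℝ => Real.sqrt ((v - z) ^ 2 + s)) := by
  rw [contDiff_iff_contDiffAt]
  intro v
  have hpos : 0 < (v - z) ^ 2 + s := by positivity
  exact ContDiffAt.sqrt
    ((((contDiff_id.sub contDiff_const).pow 2).add contDiff_const).contDiffAt) hpos.ne'

set_option maxHeartbeats 2000000 in
/-- Phase derivative estimates for the Euclidean model oscillatory integral: with
`φ(u₁) = √((u₁-1)² + |u'|² + t²) − √((u₁-z₁)² + |u'|² + t²)`, `t ≈ r`, `z₁ ∼ 1`, `z₁ ≠ 1`,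
on the region where both square roots are `≈ 1`:
`|∂_{u₁}φ| ≳ (r² + |u'|²)|1 - z₁|` and `|∂_{u₁}^m φ| ≲ (r² + |u'|²)|1 - z₁|` for `m ≥ 1`. -/
theorem phase_derivative_estimates (k : ℕ) (hk : 1 ≤ k) :
    ∃ c > (0:ℝ), ∀ m : ℕ, 1 ≤ m → ∃ C > (0:ℝ),
      ∀ (r t z₁ u₁ : ℝ) (u' : EuclideanSpace ℝ (Fin (k - 1))),
        0 < r → r ≤ 1 → r ≤ t → t ≤ 2 * r →
        |z₁ - 1| ≤ 1 / 2 → z₁ ≠ 1 →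
        1 / 2 ≤ Real.sqrt ((u₁ - 1) ^ 2 + ‖u'‖ ^ 2 + t ^ 2) →
        Real.sqrt ((u₁ - 1) ^ 2 + ‖u'‖ ^ 2 + t ^ 2) ≤ 2 →
        1 / 2 ≤ Real.sqrt ((u₁ - z₁) ^ 2 + ‖u'‖ ^ 2 + t ^ 2) →
        Real.sqrt ((u₁ - z₁) ^ 2 + ‖u'‖ ^ 2 + t ^ 2) ≤ 2 →
        c * ((r ^ 2 + ‖u'‖ ^ 2) * |1 - z₁|) ≤
          |deriv (fun v : ℝ => Real.sqrt ((v - 1) ^ 2 + ‖u'‖ ^ 2 + t ^ 2) -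
            Real.sqrt ((v - z₁) ^ 2 + ‖u'‖ ^ 2 + t ^ 2)) u₁| ∧
        |iteratedDeriv m (fun v : ℝ => Real.sqrt ((v - 1) ^ 2 + ‖u'‖ ^ 2 + t ^ 2) -
            Real.sqrt ((v - z₁) ^ 2 + ‖u'‖ ^ 2 + t ^ 2)) u₁| ≤
          C * ((r ^ 2 + ‖u'‖ ^ 2) * |1 - z₁|) := by
  refine ⟨1/8, by norm_num, ?_⟩
  intro m hm
  obtain ⟨n, rfl⟩ : ∃ n, m = n + 1 := ⟨m - 1, (Nat.succ_pred_eq_of_pos hm).symm⟩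
  obtain ⟨M, hMpos, hM⟩ := exists_EE_bound n
  have hKpos : (0:ℝ) < (3/16 : ℝ) ^ (-(3/2) - (n:ℝ)) := Real.rpow_pos_of_pos (by norm_num) _
  refine ⟨4 * (M * (3/16 : ℝ) ^ (-(3/2) - (n:ℝ))), by positivity, ?_⟩
  intro r t z₁ u₁ u' hr hr1 hrt ht2r hz hzne hs1 hs2 hs3 hs4
  set w : ℝ := ‖u'‖ ^ 2 with hw
  have hw0 : 0 ≤ w := sq_nonneg _
  have ht : 0 < t := lt_of_lt_of_le hr hrt
  set s : ℝ := w + t ^ 2 with hsdef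
  have hs : 0 < s := by positivity
  set a : ℝ := u₁ - 1 with hadef
  set b : ℝ := u₁ - z₁ with hbdef
  -- square root bounds
  have hA : (u₁ - 1) ^ 2 + w + t ^ 2 = a ^ 2 + s := by rw [hadef, hsdef]; ring
  have hB : (u₁ - z₁) ^ 2 + w + t ^ 2 = b ^ 2 + s := by rw [hbdef, hsdef]; ring
  rw [hA] at hs1 hs2
  rw [hB] at hs3 hs4
  have hA0 : (0:ℝ) ≤ a ^ 2 + s := by positivity
  have hB0 : (0:ℝ) ≤ b ^ 2 + s := by positivity
  have ha1 : 1/4 ≤ a ^ 2 + s := by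
    nlinarith [Real.sq_sqrt hA0, Real.sqrt_nonneg (a ^ 2 + s)]
  have ha4 : a ^ 2 + s ≤ 4 := by
    nlinarith [Real.sq_sqrt hA0, Real.sqrt_nonneg (a ^ 2 + s)]
  have hb1 : 1/4 ≤ b ^ 2 + s := by
    nlinarith [Real.sq_sqrt hB0, Real.sqrt_nonneg (b ^ 2 + s)]
  have hb4 : b ^ 2 + s ≤ 4 := by
    nlinarith [Real.sq_sqrt hB0, Real.sqrt_nonneg (b ^ 2 + s)]
  have habsq : (a - b) ^ 2 ≤ 1/4 := by
    have h1 : a - b = z₁ - 1 := by rw [hadef, hbdef]; ring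
    rw [h1]
    nlinarith [sq_abs (z₁ - 1), abs_nonneg (z₁ - 1)]
  have hab_eq : |a - b| = |1 - z₁| := by
    rw [show a - b = z₁ - 1 by rw [hadef, hbdef]; ring, abs_sub_comm]
  have hane : a ≠ b := by
    intro h
    rw [hadef, hbdef] at h
    exact hzne (by linarith)
  have hsle4 : s ≤ 4 := le_trans (by nlinarith) ha4
  have hs_low : r ^ 2 + w ≤ s := by rw [hsdef]; nlinarith
  have hs_up : s ≤ 4 * (r ^ 2 + w) := by rw [hsdef]; nlinarith
  -- rewrite the function
  have hF : (fun v : ℝ => Real.sqrt ((v - 1) ^ 2 + w + t ^ 2) -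
        Real.sqrt ((v - z₁) ^ 2 + w + t ^ 2))
      = fun v : ℝ => Real.sqrt ((v - 1) ^ 2 + s) - Real.sqrt ((v - z₁) ^ 2 + s) := by
    funext v; rw [hsdef, add_assoc, add_assoc]
  constructor
  · -- lower bound for the first derivative
    have hd : HasDerivAt (fun v : ℝ => Real.sqrt ((v - 1) ^ 2 + s) -
        Real.sqrt ((v - z₁) ^ 2 + s)) (hfun s a - hfun s b) u₁ :=
      (hasDerivAt_shifted hs 1 u₁).sub (hasDerivAt_shifted hs z₁ u₁)
    rw [hF, hd.deriv]
    have hlow : s/8 * |a - b| ≤ |hfun s a - hfun s b| := by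
      rcases hane.lt_or_gt with hlt | hlt
      · calc s/8 * |a - b| = s/8 * (b - a) := by
              rw [abs_sub_comm, abs_of_pos (sub_pos.2 hlt)]
        _ ≤ |hfun s b - hfun s a| := hfun_lower_core hs ha4 hb4 hlt
        _ = |hfun s a - hfun s b| := abs_sub_comm _ _
      · calc s/8 * |a - b| = s/8 * (a - b) := by
              rw [abs_of_pos (sub_pos.2 hlt)]
        _ ≤ |hfun s a - hfun s b| := hfun_lower_core hs hb4 ha4 hlt
    calc 1/8 * ((r ^ 2 + w) * |1 - z₁|) ≤ s/8 * |a - b| := by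
          rw [hab_eq]
          nlinarith [abs_nonneg (1 - z₁)]
    _ ≤ |hfun s a - hfun s b| := hlow
  · -- upper bound for the m-th derivative
    rw [hF]
    have hsub : iteratedDeriv (n+1) (fun v : ℝ => Real.sqrt ((v - 1) ^ 2 + s) -
          Real.sqrt ((v - z₁) ^ 2 + s)) u₁
        = iteratedDeriv (n+1) (fun v : ℝ => Real.sqrt ((v - 1) ^ 2 + s)) u₁ -
          iteratedDeriv (n+1) (fun v : ℝ => Real.sqrt ((v - z₁) ^ 2 + s)) u₁ := by
      simp only [← iteratedDerivWithin_univ]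
      exact iteratedDerivWithin_sub (Set.mem_univ u₁) uniqueDiffOn_univ
        (contDiff_shifted hs 1 (n+1)).contDiffWithinAt (contDiff_shifted hs z₁ (n+1)).contDiffWithinAt
    have hg1 : iteratedDeriv (n+1) (fun v : ℝ => Real.sqrt ((v - 1) ^ 2 + s)) u₁
        = iteratedDeriv n (hfun s) a := by
      rw [iteratedDeriv_shifted, iteratedDeriv_succ', deriv_gfun hs]
    have hg2 : iteratedDeriv (n+1) (fun v : ℝ => Real.sqrt ((v - z₁) ^ 2 + s)) u₁
        = iteratedDeriv n (hfun s) b := by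
      rw [iteratedDeriv_shifted, iteratedDeriv_succ', deriv_gfun hs]
    rw [hsub, hg1, hg2]
    have hupper := hfun_upper n hM hs hsle4 ha1 ha4 hb1 hb4 habsq
    have hMK : (0:ℝ) ≤ M * (3/16 : ℝ) ^ (-(3/2) - (n:ℝ)) := by positivity
    calc |iteratedDeriv n (hfun s) a - iteratedDeriv n (hfun s) b|
        ≤ s * (M * (3/16 : ℝ) ^ (-(3/2) - (n:ℝ))) * |a - b| := hupper
    _ ≤ 4 * (M * (3/16 : ℝ) ^ (-(3/2) - (n:ℝ))) * ((r ^ 2 + w) * |1 - z₁|) := by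
        rw [hab_eq]
        have h := mul_le_mul_of_nonneg_right hs_up
          (mul_nonneg hMK (abs_nonneg (1 - z₁)))
        nlinarith [h]
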